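/- Let h > k ≥ 0 be integers, n_t > 0, and p₀, p₁ > 0 with p₀+p₁ = 1. Then there exists a threshold n_th ∈ ℕ (with n_th ≥ h−1 possible) such that λ_n ≥ 0 for all n ≤ n_th and λ_n < 0 for all n > n_th, where λ_n is the eigenvalue sequence λ_n = 0 for n < k, λ_n = p₁·C(n,k)·n_t^(n−k)/(n_t+1)^(n+1) for k ≤ n < h, and λ_n = [p₁·C(n,k)·n_t^(h−k) − p₀·C(n,h)]·n_t^(n−h)/(n_t+1)^(n+1) for n ≥ h. Moreover n_th is the maximum n satisfying C(n,k)·n_t^(h−k) ≥ (p₀/p₁)·C(n,h). -/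

import Mathlib

/-- Eigenvalues `λ_n` of the decision operator `p₁·ρ(0,k) − p₀·ρ(0,h)`:
`λ_n = 0` for `n < k`; `λ_n = p₁ C(n,k) n_t^(n−k)/(n_t+1)^(n+1)` for `k ≤ n < h`;
`λ_n = p₁ C(n,k) n_t^(n−k)/(n_t+1)^(n+1) − p₀ C(n,h) n_t^(n−h)/(n_t+1)^(n+1)` for `n ≥ h`. -/
noncomputable def lam (k h : ℕ) (nt p0 p1 : ℝ) (n : ℕ) : ℝ :=
  if n < k then 0
  else if n < h then p1 * (n.choose k) * nt ^ (n - k) / (nt + 1) ^ (n + 1)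
  else p1 * (n.choose k) * nt ^ (n - k) / (nt + 1) ^ (n + 1)
    - p0 * (n.choose h) * nt ^ (n - h) / (nt + 1) ^ (n + 1)

/-- Lower bound for binomial coefficients: `m + 1 - j ≤ C(m, j)` when `1 ≤ j ≤ m`. -/
lemma choose_lower_bound (j : ℕ) (hj : 1 ≤ j) : ∀ m, j ≤ m → m + 1 - j ≤ m.choose j := by
  intro m
  induction m with
  | zero => intro hm; omega
  | succ m ih =>
    intro hm
    rcases Nat.lt_or_ge m j with hlt | hge
    · have : j = m + 1 := by omega
      subst this
      simp [Nat.choose_self]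
    · have h1 := ih hge
      obtain ⟨j', rfl⟩ : ∃ j', j = j' + 1 := ⟨j - 1, by omega⟩
      have h2 : 0 < m.choose j' := Nat.choose_pos (by omega)
      rw [Nat.choose_succ_succ']
      omega

/-- Existence and characterization of the optimal Kennedy detection threshold:
there is `n_th` with `λ_n ≥ 0` for `n ≤ n_th` and `λ_n < 0` for `n > n_th`, and
`n_th` is the maximum `n` with `C(n,k)·n_t^(h−k) ≥ (p₀/p₁)·C(n,h)`. -/
theorem optimal_threshold_exists (k h : ℕ) (hkh : k < h) (nt p0 p1 : ℝ)
    (hnt : 0 < nt) (hp0 : 0 < p0) (hp1 : 0 < p1) (hp : p0 + p1 = 1) :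
    ∃ nth : ℕ,
      (∀ n ≤ nth, 0 ≤ lam k h nt p0 p1 n) ∧
      (∀ n, nth < n → lam k h nt p0 p1 n < 0) ∧
      IsGreatest {n : ℕ | (p0 / p1) * (n.choose h : ℝ) ≤ (n.choose k : ℝ) * nt ^ (h - k)} nth := by
  classical
  set P : ℕ → Prop := fun n => (p0 / p1) * (n.choose h : ℝ) ≤ (n.choose k : ℝ) * nt ^ (h - k)
    with hPdef
  have hntpow : (0:ℝ) < nt ^ (h - k) := pow_pos hnt _
  -- P holds trivially below h
  have hPlow : ∀ n, n < h → P n := by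
    intro n hn
    show (p0 / p1) * (n.choose h : ℝ) ≤ (n.choose k : ℝ) * nt ^ (h - k)
    rw [Nat.choose_eq_zero_of_lt hn]
    push_cast
    rw [mul_zero]
    positivity
  -- downward step: P (n+1) → P n
  have hstep : ∀ n, P (n + 1) → P n := by
    intro n hPn1
    rcases Nat.lt_or_ge n h with hn | hn
    · exact hPlow n hn
    · have hkn : k ≤ n := le_of_lt (lt_of_lt_of_le hkh hn)
      have idh : (n.choose h : ℝ) * (n + 1) = ((n+1).choose h : ℝ) * ((n:ℝ) + 1 - h) := by
        have h0 := Nat.choose_mul_succ_eq n h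
        have hh : h ≤ n + 1 := by omega
        have h1 : ((n.choose h * (n + 1) : ℕ) : ℝ) = (((n + 1).choose h * (n + 1 - h) : ℕ) : ℝ) := by
          exact_mod_cast congrArg (Nat.cast (R := ℝ)) h0
        push_cast [Nat.cast_sub hh] at h1
        linarith [h1]
      have idk : (n.choose k : ℝ) * (n + 1) = ((n+1).choose k : ℝ) * ((n:ℝ) + 1 - k) := by
        have h0 := Nat.choose_mul_succ_eq n k
        have hh : k ≤ n + 1 := by omega
        have h1 : ((n.choose k * (n + 1) : ℕ) : ℝ) = (((n + 1).choose k * (n + 1 - k) : ℕ) : ℝ) := by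
          exact_mod_cast congrArg (Nat.cast (R := ℝ)) h0
        push_cast [Nat.cast_sub hh] at h1
        linarith [h1]
      have hfac : ((n:ℝ) + 1 - h) ≤ ((n:ℝ) + 1 - k) := by
        have : (k:ℝ) ≤ h := by exact_mod_cast le_of_lt hkh
        linarith
      have hfacpos : (0:ℝ) ≤ (n:ℝ) + 1 - h := by
        have : (h:ℝ) ≤ n := by exact_mod_cast hn
        linarith
      have hPn1' : (p0 / p1) * ((n+1).choose h : ℝ) ≤ ((n+1).choose k : ℝ) * nt ^ (h - k) := hPn1
      have key : (p0 / p1) * (n.choose h : ℝ) * ((n:ℝ)+1)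
          ≤ (n.choose k : ℝ) * nt ^ (h - k) * ((n:ℝ)+1) := by
        calc (p0 / p1) * (n.choose h : ℝ) * ((n:ℝ)+1)
            = (p0 / p1) * (((n+1).choose h : ℝ) * ((n:ℝ) + 1 - h)) := by rw [mul_assoc, idh]
          _ ≤ (((n+1).choose k : ℝ) * nt ^ (h - k)) * ((n:ℝ) + 1 - h) := by
              rw [← mul_assoc]
              exact mul_le_mul_of_nonneg_right hPn1' hfacpos
          _ ≤ (((n+1).choose k : ℝ) * nt ^ (h - k)) * ((n:ℝ) + 1 - k) := by
              apply mul_le_mul_of_nonneg_left hfac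
              positivity
          _ = (n.choose k : ℝ) * nt ^ (h - k) * ((n:ℝ)+1) := by
              rw [mul_right_comm, ← idk]; ring
      have hpos : (0:ℝ) < (n:ℝ) + 1 := by positivity
      exact le_of_mul_le_mul_right key hpos
  -- downward closure
  have hdown : ∀ m n, m ≤ n → P n → P m := by
    intro m n hmn hPn
    induction n with
    | zero =>
      have : m = 0 := by omega
      subst this; exact hPn
    | succ n ih =>
      rcases Nat.lt_or_ge m (n+1) with hlt | hge
      · exact ih (by omega) (hstep n hPn)
      · have : m = n + 1 := by omega
        subst this; exact hPn
  -- eventually ¬ P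
  obtain ⟨M, hM⟩ := exists_nat_gt (nt ^ (h - k) * (h.choose k : ℝ) * p1 / p0)
  set N := M + h with hNdef
  have hNfail : ¬ P N := by
    have hhN : h ≤ N := by omega
    have hkN : k ≤ N := by omega
    have hid := Nat.choose_mul (n := N) (le_of_lt hkh)
    have hlb : N + 1 - h ≤ (N - k).choose (h - k) := by
      have := choose_lower_bound (h - k) (by omega) (N - k) (by omega)
      omega
    have hnat : N.choose k * (N + 1 - h) ≤ N.choose h * h.choose k := by
      rw [hid]; exact Nat.mul_le_mul_left _ hlb
    have hcast : (N.choose k : ℝ) * ((N:ℝ) + 1 - h) ≤ (N.choose h : ℝ) * (h.choose k : ℝ) := by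
      have h1 : ((N.choose k * (N + 1 - h) : ℕ) : ℝ) ≤ ((N.choose h * h.choose k : ℕ) : ℝ) := by
        exact_mod_cast hnat
      push_cast [Nat.cast_sub (show h ≤ N + 1 by omega)] at h1
      linarith [h1]
    have hc : (0:ℝ) < (h.choose k : ℝ) := by
      exact_mod_cast Nat.choose_pos (le_of_lt hkh)
    have hck : (0:ℝ) < (N.choose k : ℝ) := by
      exact_mod_cast Nat.choose_pos hkN
    have hMlt : nt ^ (h - k) * (h.choose k : ℝ) * p1 / p0 < (N:ℝ) + 1 - h := by
      have hNM : (N:ℝ) + 1 - h = (M:ℝ) + 1 := by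
        rw [hNdef]; push_cast; ring
      rw [hNM]; linarith [hM]
    have h1 : nt ^ (h - k) * (h.choose k : ℝ) * p1 < ((N:ℝ) + 1 - h) * p0 := by
      rw [div_lt_iff₀ hp0] at hMlt; linarith [hMlt]
    show ¬ ((p0 / p1) * (N.choose h : ℝ) ≤ (N.choose k : ℝ) * nt ^ (h - k))
    push_neg
    have X : (N.choose k : ℝ) * nt ^ (h - k) * (p1 * (h.choose k : ℝ))
        < (p0 / p1) * (N.choose h : ℝ) * (p1 * (h.choose k : ℝ)) := by
      have e : (p0 / p1) * (N.choose h : ℝ) * (p1 * (h.choose k : ℝ))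
          = p0 * ((N.choose h : ℝ) * (h.choose k : ℝ)) := by
        field_simp
      rw [e]
      nlinarith [mul_lt_mul_of_pos_right h1 hck, mul_le_mul_of_nonneg_left hcast hp0.le]
    exact lt_of_mul_lt_mul_right X (by positivity)
  -- the threshold
  set nth := Nat.findGreatest P N with hnthdef
  have hPnth : P nth := Nat.findGreatest_spec (Nat.zero_le N) (hPlow 0 (by omega))
  have hub : ∀ m, P m → m ≤ nth := by
    intro m hm
    have hmN : m ≤ N := by
      by_contra hc
      exact hNfail (hdown N m (by omega) hm)
    exact Nat.le_findGreatest hmN hm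
  -- equivalence of sign of lam with P for n ≥ h
  have hD : ∀ n : ℕ, (0:ℝ) < (nt + 1) ^ (n + 1) := fun n => pow_pos (by linarith) _
  have lam_iff : ∀ n, h ≤ n → (0 ≤ lam k h nt p0 p1 n ↔ P n) := by
    intro n hn
    have hkn : k ≤ n := le_of_lt (lt_of_lt_of_le hkh hn)
    rw [lam, if_neg (by omega), if_neg (by omega)]
    rw [div_sub_div_same, le_div_iff₀ (hD n), zero_mul, sub_nonneg]
    have hsplit : n - k = (h - k) + (n - h) := by omega
    rw [hsplit, pow_add]
    have hw : (0:ℝ) < nt ^ (n - h) := pow_pos hnt _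
    constructor
    · intro hle
      show (p0 / p1) * (n.choose h : ℝ) ≤ (n.choose k : ℝ) * nt ^ (h - k)
      rw [div_mul_eq_mul_div, div_le_iff₀ hp1]
      have := le_of_mul_le_mul_right (by nlinarith [hle] : p0 * (n.choose h : ℝ) * nt ^ (n - h)
          ≤ (n.choose k : ℝ) * nt ^ (h - k) * p1 * nt ^ (n - h)) hw
      linarith [this]
    · intro hPn
      have hPn' : (p0 / p1) * (n.choose h : ℝ) ≤ (n.choose k : ℝ) * nt ^ (h - k) := hPn
      rw [div_mul_eq_mul_div, div_le_iff₀ hp1] at hPn'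
      nlinarith [mul_le_mul_of_nonneg_right hPn' hw.le]
  refine ⟨nth, ?_, ?_, hPnth, fun m hm => hub m hm⟩
  · intro n hn
    have hPn : P n := hdown n nth hn hPnth
    rcases Nat.lt_or_ge n k with h1 | h1
    · rw [lam, if_pos h1]
    · rcases Nat.lt_or_ge n h with h2 | h2
      · rw [lam, if_neg (by omega), if_pos h2]
        positivity
      · exact (lam_iff n h2).mpr hPn
  · intro n hn
    have hh1 : h - 1 ≤ nth := hub (h - 1) (hPlow (h - 1) (by omega))
    have hhn : h ≤ n := by omega
    have hnotP : ¬ P n := fun hPn => absurd (hub n hPn) (by omega)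
    by_contra hc
    push_neg at hc
    exact hnotP ((lam_iff n hhn).mp hc)
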